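/- arXiv:1802.06532 — 5 statements merged into one kernel-verified Lean document; each statement's English description precedes it below -/
import Mathlib

section
/- Let P be an irreducible, reversible, and lazy transition matrix on a finite state space V with stationary distribution π. Then the local 2-divergence satisfies Ψ_2(P)^2 ≤ 2 max_{w∈V} π_w / min{π_v P(v,u) : P(v,u) > 0}. -/
/-- General upper bound on the local 2-divergence:
    Ψ₂(P)² ≤ 2 max_w π_w / min{π_v P(v,u) : P(v,u) > 0},
    for P irreducible, reversible and lazy. -/
theorem local_two_divergence_bound
    {V : Type*} [Fintype V] [DecidableEq V] [Nonempty V]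
    (P : Matrix V V ℝ) (π : V → ℝ)
    (hnn : ∀ v u, 0 ≤ P v u) (hrow : ∀ v, ∑ u, P v u = 1)
    (hπnn : ∀ v, 0 ≤ π v) (hπsum : ∑ v, π v = 1)
    (hstat : ∀ u, ∑ v, π v * P v u = π u)
    (hrev : ∀ v u, π v * P v u = π u * P u v)
    (hirr : ∀ v u, ∃ t : ℕ, 0 < (P ^ t) v u)
    (hlazy : ∀ v, (1 / 2 : ℝ) ≤ P v v)
    (πmax pmin : ℝ)
    (hπmax : ∀ v, π v ≤ πmax)
    (hpmin : ∀ v u, 0 < P v u → pmin ≤ π v * P v u)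
    (hpminpos : 0 < pmin)
    (w : V) :
    Summable (fun t : ℕ =>
      ∑ v, ∑ u, if 0 < P v u then ((P ^ t) v w - (P ^ t) u w) ^ 2 else 0) ∧
    (∑' t : ℕ,
      ∑ v, ∑ u, if 0 < P v u then ((P ^ t) v w - (P ^ t) u w) ^ 2 else 0)
      ≤ 2 * πmax / pmin := by
  classical
  set f : ℕ → V → ℝ := fun t v => (P ^ t) v w with hf
  set S : ℕ → ℝ := fun t =>
    ∑ v, ∑ u, if 0 < P v u then (f t v - f t u) ^ 2 else 0 with hS
  set Nrm : ℕ → ℝ := fun t => ∑ v, π v * (f t v) ^ 2 with hNrm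
  have hstep : ∀ t v, f (t + 1) v = ∑ u, P v u * f t u := by
    intro t v
    simp only [hf, pow_succ', Matrix.mul_apply]
  have hNrm_nonneg : ∀ t, 0 ≤ Nrm t := fun t =>
    Finset.sum_nonneg fun v _ => mul_nonneg (hπnn v) (sq_nonneg _)
  have hS_nonneg : ∀ t, 0 ≤ S t := fun t =>
    Finset.sum_nonneg fun v _ => Finset.sum_nonneg fun u _ => by positivity
  -- the key per-step bound
  have key : ∀ t, pmin * S t ≤ 2 * (Nrm t - Nrm (t + 1)) := by
    intro t
    set g : V → ℝ := f t with hg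
    set h : V → ℝ := f (t + 1) with hh
    set q : V → ℝ := fun v => 2 * h v - g v with hq
    set Q : Matrix V V ℝ := fun v u => 2 * P v u - (if v = u then 1 else 0) with hQ
    have eNt : Nrm t = ∑ v, π v * g v ^ 2 := rfl
    have eNt1 : Nrm (t + 1) = ∑ v, π v * h v ^ 2 := rfl
    have hQnn : ∀ v u, 0 ≤ Q v u := by
      intro v u
      by_cases hvu : v = u
      · subst hvu
        have h0 : Q v v = 2 * P v v - 1 := by simp [hQ]
        have := hlazy v
        rw [h0]; linarith
      · have h0 : Q v u = 2 * P v u := by simp [hQ, hvu]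
        have := hnn v u
        rw [h0]; linarith
    have hQrow : ∀ v, ∑ u, Q v u = 1 := by
      intro v
      simp only [hQ]
      rw [Finset.sum_sub_distrib, ← Finset.mul_sum, hrow v]
      norm_num
    have hQstat : ∀ u, ∑ v, π v * Q v u = π u := by
      intro u
      simp only [hQ, mul_sub]
      rw [Finset.sum_sub_distrib]
      have h1 : ∑ v, π v * (2 * P v u) = 2 * π u := by
        rw [show (2:ℝ) * π u = 2 * ∑ v, π v * P v u by rw [hstat u], Finset.mul_sum]
        exact Finset.sum_congr rfl fun v _ => by ring
      rw [h1]
      have h2 : ∑ v, π v * (if v = u then (1:ℝ) else 0) = π u := by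
        rw [Finset.sum_congr rfl (fun v _ => by rw [mul_ite, mul_one, mul_zero])]
        simp
      rw [h2]; ring
    have hqQ : ∀ v, q v = ∑ u, Q v u * g u := by
      intro v
      simp only [hQ, sub_mul, Finset.sum_sub_distrib]
      have h1 : ∑ u, 2 * P v u * g u = 2 * h v := by
        rw [hh, hstep t v, Finset.mul_sum]
        exact Finset.sum_congr rfl fun u _ => by ring
      have h2 : ∑ u, (if v = u then (1:ℝ) else 0) * g u = g v := by
        simp
      rw [h1, h2, hq]
    -- Jensen: (q v)^2 ≤ ∑ u, Q v u * (g u)^2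
    have hjensen : ∀ v, (q v) ^ 2 ≤ ∑ u, Q v u * (g u) ^ 2 := by
      intro v
      rw [hqQ v]
      have hCS := Finset.sum_mul_sq_le_sq_mul_sq Finset.univ
        (fun u => Real.sqrt (Q v u)) (fun u => Real.sqrt (Q v u) * g u)
      have heq : ∀ u : V, Real.sqrt (Q v u) * (Real.sqrt (Q v u) * g u) = Q v u * g u := by
        intro u
        rw [← mul_assoc, Real.mul_self_sqrt (hQnn v u)]
      have heq2 : ∀ u : V, (Real.sqrt (Q v u)) ^ 2 = Q v u := fun u =>
        Real.sq_sqrt (hQnn v u)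
      have heq3 : ∀ u : V, (Real.sqrt (Q v u) * g u) ^ 2 = Q v u * g u ^ 2 := by
        intro u
        rw [mul_pow, heq2]
      calc (∑ u, Q v u * g u) ^ 2
          = (∑ u, Real.sqrt (Q v u) * (Real.sqrt (Q v u) * g u)) ^ 2 := by
            rw [Finset.sum_congr rfl fun u _ => (heq u).symm]
        _ ≤ (∑ u, (Real.sqrt (Q v u)) ^ 2) * ∑ u, (Real.sqrt (Q v u) * g u) ^ 2 := hCS
        _ = (∑ u, Q v u) * ∑ u, Q v u * g u ^ 2 := by
            rw [Finset.sum_congr rfl fun u _ => heq2 u,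
              Finset.sum_congr rfl fun u _ => heq3 u]
        _ = ∑ u, Q v u * g u ^ 2 := by rw [hQrow v, one_mul]
    -- contraction: ∑ π v * (q v)^2 ≤ Nrm t
    have hcontr : ∑ v, π v * (q v) ^ 2 ≤ Nrm t := by
      calc ∑ v, π v * (q v) ^ 2
          ≤ ∑ v, π v * ∑ u, Q v u * (g u) ^ 2 :=
            Finset.sum_le_sum fun v _ =>
              mul_le_mul_of_nonneg_left (hjensen v) (hπnn v)
        _ = ∑ v, ∑ u, π v * Q v u * g u ^ 2 :=
            Finset.sum_congr rfl fun v _ => by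
              rw [Finset.mul_sum]
              exact Finset.sum_congr rfl fun u _ => by ring
        _ = ∑ u, ∑ v, π v * Q v u * g u ^ 2 := Finset.sum_comm
        _ = ∑ u, (∑ v, π v * Q v u) * g u ^ 2 :=
            Finset.sum_congr rfl fun u _ => by rw [Finset.sum_mul]
        _ = ∑ u, π u * (g u) ^ 2 :=
            Finset.sum_congr rfl fun u _ => by rw [hQstat u]
        _ = Nrm t := eNt.symm
    -- inner product
    set ip : ℝ := ∑ v, π v * g v * h v with hip
    have pt : ∀ v : V, 4 * (π v * g v * h v - π v * h v ^ 2)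
        = π v * g v ^ 2 - π v * q v ^ 2 := by
      intro v; simp only [hq]; ring
    have hid : 4 * (ip - Nrm (t + 1)) = Nrm t - ∑ v, π v * q v ^ 2 := by
      calc 4 * (ip - Nrm (t + 1))
          = ∑ v, 4 * (π v * g v * h v - π v * h v ^ 2) := by
            rw [hip, eNt1, ← Finset.sum_sub_distrib, Finset.mul_sum]
        _ = ∑ v, (π v * g v ^ 2 - π v * q v ^ 2) :=
            Finset.sum_congr rfl fun v _ => pt v
        _ = Nrm t - ∑ v, π v * q v ^ 2 := by
            rw [Finset.sum_sub_distrib, eNt]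
    have hC : Nrm (t + 1) ≤ ip := by linarith
    -- Dirichlet form identity
    set D : ℝ := ∑ v, ∑ u, π v * P v u * (g v - g u) ^ 2 with hD
    have hB : D = 2 * (Nrm t - ip) := by
      have expand : ∀ v u : V, π v * P v u * (g v - g u) ^ 2 =
          (π v * g v ^ 2) * P v u - 2 * (π v * g v) * (P v u * g u)
            + (π v * P v u) * g u ^ 2 := fun v u => by ring
      simp only [hD]
      rw [Finset.sum_congr rfl fun v _ => Finset.sum_congr rfl fun u _ => expand v u]
      simp only [Finset.sum_add_distrib, Finset.sum_sub_distrib]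
      have e1 : ∑ v, ∑ u, (π v * g v ^ 2) * P v u = Nrm t := by
        rw [eNt]
        exact Finset.sum_congr rfl fun v _ => by rw [← Finset.mul_sum, hrow v, mul_one]
      have e2 : ∑ v, ∑ u, 2 * (π v * g v) * (P v u * g u) = 2 * ip := by
        rw [hip, Finset.mul_sum]
        refine Finset.sum_congr rfl fun v _ => ?_
        rw [hh, hstep t v, Finset.mul_sum, Finset.mul_sum]
        exact Finset.sum_congr rfl fun u _ => by ring
      have e3 : ∑ v, ∑ u, (π v * P v u) * g u ^ 2 = Nrm t := by
        rw [Finset.sum_comm, eNt]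
        exact Finset.sum_congr rfl fun u _ => by rw [← Finset.sum_mul, hstat u]
      rw [e1, e2, e3]
      ring
    -- termwise comparison: pmin * S t ≤ D
    have hA : pmin * S t ≤ D := by
      rw [hS, hD, Finset.mul_sum]
      refine Finset.sum_le_sum fun v _ => ?_
      rw [Finset.mul_sum]
      refine Finset.sum_le_sum fun u _ => ?_
      by_cases hvu : 0 < P v u
      · rw [if_pos hvu]
        exact mul_le_mul_of_nonneg_right (hpmin v u hvu) (sq_nonneg _)
      · rw [if_neg hvu, mul_zero]
        exact mul_nonneg (mul_nonneg (hπnn v) (hnn v u)) (sq_nonneg _)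
    calc pmin * S t ≤ D := hA
      _ = 2 * (Nrm t - ip) := hB
      _ ≤ 2 * (Nrm t - Nrm (t + 1)) := by linarith
  -- Nrm 0 = π w
  have hN0 : Nrm 0 = π w := by
    simp only [hNrm, hf, pow_zero, Matrix.one_apply]
    rw [Finset.sum_congr rfl fun v _ => by
      rw [show ((if v = w then (1:ℝ) else 0)) ^ 2 = if v = w then (1:ℝ) else 0 by
        split <;> norm_num, mul_ite, mul_one, mul_zero]]
    simp
  -- partial sums bounded
  have hpartial : ∀ T : ℕ, ∑ t ∈ Finset.range T, S t ≤ 2 * πmax / pmin := by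
    intro T
    rw [le_div_iff₀ hpminpos]
    have h1 : (∑ t ∈ Finset.range T, S t) * pmin
        = ∑ t ∈ Finset.range T, pmin * S t := by
      rw [Finset.sum_mul]
      exact Finset.sum_congr rfl fun t _ => by ring
    rw [h1]
    calc ∑ t ∈ Finset.range T, pmin * S t
        ≤ ∑ t ∈ Finset.range T, 2 * (Nrm t - Nrm (t + 1)) :=
          Finset.sum_le_sum fun t _ => key t
      _ = 2 * (Nrm 0 - Nrm T) := by
          rw [← Finset.mul_sum, Finset.sum_range_sub' Nrm T]
      _ ≤ 2 * Nrm 0 := by linarith [hNrm_nonneg T]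
      _ = 2 * π w := by rw [hN0]
      _ ≤ 2 * πmax := by linarith [hπmax w]
  have hsummable : Summable S :=
    summable_of_sum_range_le hS_nonneg hpartial
  exact ⟨hsummable, Summable.tsum_le_of_sum_range_le hsummable hpartial⟩
end

section
/- Let P be an irreducible, symmetric, and lazy transition matrix on a finite state space V of N states. Then Ψ_2(P)^2 ≤ 2 / min{P(v,u) : P(v,u) > 0}. -/
open Finset

-- Cauchy-Schwarz step: doubly-stochastic contraction in ℓ²
lemma contract_aux {V : Type*} [Fintype V] (Q : V → V → ℝ)
    (hnn : ∀ v u, 0 ≤ Q v u) (hrow : ∀ v, ∑ u, Q v u = 1)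
    (hcol : ∀ u, ∑ v, Q v u = 1) (g : V → ℝ) :
    ∑ v, (∑ u, Q v u * g u) ^ 2 ≤ ∑ v, g v ^ 2 := by
  have step : ∀ v, (∑ u, Q v u * g u) ^ 2 ≤ ∑ u, Q v u * g u ^ 2 := by
    intro v
    have cs := Finset.sum_mul_sq_le_sq_mul_sq Finset.univ
      (fun u => Real.sqrt (Q v u)) (fun u => Real.sqrt (Q v u) * g u)
    have h1 : ∀ u : V, Real.sqrt (Q v u) * (Real.sqrt (Q v u) * g u) = Q v u * g u := by
      intro u
      rw [← mul_assoc, Real.mul_self_sqrt (hnn v u)]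
    have h2 : ∀ u : V, Real.sqrt (Q v u) ^ 2 = Q v u := fun u => Real.sq_sqrt (hnn v u)
    have h3 : ∀ u : V, (Real.sqrt (Q v u) * g u) ^ 2 = Q v u * g u ^ 2 := by
      intro u; rw [mul_pow, h2]
    simp only [h1, h2, h3] at cs
    calc (∑ u, Q v u * g u) ^ 2 ≤ (∑ u, Q v u) * ∑ u, Q v u * g u ^ 2 := cs
      _ = ∑ u, Q v u * g u ^ 2 := by rw [hrow v, one_mul]
  calc ∑ v, (∑ u, Q v u * g u) ^ 2 ≤ ∑ v, ∑ u, Q v u * g u ^ 2 :=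
        Finset.sum_le_sum fun v _ => step v
    _ = ∑ u, (∑ v, Q v u) * g u ^ 2 := by rw [Finset.sum_comm]; simp [Finset.sum_mul]
    _ = ∑ v, g v ^ 2 := by simp [hcol]

/-- For an irreducible, symmetric, lazy stochastic matrix P,
    Ψ₂(P)² ≤ 2 / min{P(v,u) : P(v,u) > 0}. -/
theorem local_two_divergence_bound_symmetric
    {V : Type*} [Fintype V] [DecidableEq V] [Nonempty V]
    (P : Matrix V V ℝ)
    (hnn : ∀ v u, 0 ≤ P v u) (hrow : ∀ v, ∑ u, P v u = 1)
    (hsym : ∀ v u, P v u = P u v)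
    (hirr : ∀ v u, ∃ t : ℕ, 0 < (P ^ t) v u)
    (hlazy : ∀ v, (1 / 2 : ℝ) ≤ P v v)
    (pmin : ℝ)
    (hpmin : ∀ v u, 0 < P v u → pmin ≤ P v u)
    (hpminpos : 0 < pmin)
    (w : V) :
    Summable (fun t : ℕ =>
      ∑ v, ∑ u, if 0 < P v u then ((P ^ t) v w - (P ^ t) u w) ^ 2 else 0) ∧
    (∑' t : ℕ,
      ∑ v, ∑ u, if 0 < P v u then ((P ^ t) v w - (P ^ t) u w) ^ 2 else 0)
      ≤ 2 / pmin := by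
  classical
  set S : ℕ → ℝ := fun t =>
    ∑ v, ∑ u, if 0 < P v u then ((P ^ t) v w - (P ^ t) u w) ^ 2 else 0 with hS
  set f : ℕ → V → ℝ := fun t v => (P ^ t) v w with hf
  set a : ℕ → ℝ := fun t => ∑ v, (f t v) ^ 2 with ha
  have hcol : ∀ u, ∑ v, P v u = 1 := by
    intro u; rw [Finset.sum_congr rfl fun v _ => hsym v u]; exact hrow u
  have hfsucc : ∀ t v, f (t + 1) v = ∑ u, P v u * f t u := by
    intro t v
    simp only [hf, pow_succ', Matrix.mul_apply]
  -- nonnegativity of S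
  have hSnn : ∀ t, 0 ≤ S t := by
    intro t
    refine Finset.sum_nonneg fun v _ => Finset.sum_nonneg fun u _ => ?_
    split <;> positivity
  have hann : ∀ t, 0 ≤ a t := fun t => Finset.sum_nonneg fun v _ => sq_nonneg _
  have ha0 : a 0 = 1 := by
    simp [ha, hf, Matrix.one_apply, Finset.sum_ite_eq, pow_zero]
  -- the Q matrix
  set Q : V → V → ℝ := fun v u => 2 * P v u - if v = u then 1 else 0 with hQ
  have hQnn : ∀ v u, 0 ≤ Q v u := by
    intro v u
    by_cases h : v = u
    · subst h
      have := hlazy v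
      simp only [hQ]
      simp only [if_true]
      linarith
    · simp only [hQ, if_neg h, sub_zero]; linarith [hnn v u]
  have hQrow : ∀ v, ∑ u, Q v u = 1 := by
    intro v
    simp only [hQ]
    rw [Finset.sum_sub_distrib, ← Finset.mul_sum, hrow]
    simp only [Finset.sum_ite_eq, Finset.mem_univ, if_true, mul_one]
    norm_num
  have hQcol : ∀ u, ∑ v, Q v u = 1 := by
    intro u
    simp only [hQ]
    rw [Finset.sum_sub_distrib, ← Finset.mul_sum, hcol]
    simp only [Finset.sum_ite_eq', Finset.mem_univ, if_true, mul_one]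
    norm_num
  -- key: a (t+1) ≤ ⟨f t, P f t⟩
  have hkey : ∀ t, a (t + 1) ≤ ∑ v, f t v * f (t + 1) v := by
    intro t
    have hc := contract_aux Q hQnn hQrow hQcol (f t)
    have hQg : ∀ v, ∑ u, Q v u * f t u = 2 * f (t + 1) v - f t v := by
      intro v
      simp only [hQ, sub_mul, ite_mul, one_mul, zero_mul]
      rw [Finset.sum_sub_distrib, hfsucc t v]
      congr 1
      · rw [Finset.mul_sum]
        exact Finset.sum_congr rfl fun u _ => mul_assoc _ _ _
      · simp [Finset.sum_ite_eq]
    simp only [hQg] at hc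
    have expand : ∀ v : V, (2 * f (t + 1) v - f t v) ^ 2 =
        4 * f (t + 1) v ^ 2 - 4 * (f t v * f (t + 1) v) + f t v ^ 2 := by
      intro v; ring
    rw [Finset.sum_congr rfl fun v _ => expand v] at hc
    rw [Finset.sum_add_distrib, Finset.sum_sub_distrib, ← Finset.mul_sum,
      ← Finset.mul_sum] at hc
    have : 4 * a (t + 1) - 4 * ∑ v, f t v * f (t + 1) v ≤ 0 := by
      simp only [ha]; linarith
    linarith [this]
  -- Dirichlet form identity
  have hdir : ∀ t, ∑ v, ∑ u, P v u * (f t v - f t u) ^ 2 =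
      2 * a t - 2 * ∑ v, f t v * f (t + 1) v := by
    intro t
    have expand : ∀ v u : V, P v u * (f t v - f t u) ^ 2 =
        P v u * f t v ^ 2 + P v u * f t u ^ 2 - 2 * (f t v * (P v u * f t u)) := by
      intro v u; ring
    simp only [expand]
    rw [Finset.sum_congr rfl fun v _ => Finset.sum_sub_distrib ..]
    rw [Finset.sum_sub_distrib]
    rw [Finset.sum_congr rfl fun v _ => Finset.sum_add_distrib ..]
    rw [Finset.sum_add_distrib]
    have t1 : ∑ v, ∑ u, P v u * f t v ^ 2 = a t := by
      simp only [ha]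
      refine Finset.sum_congr rfl fun v _ => ?_
      rw [← Finset.sum_mul, hrow, one_mul]
    have t2 : ∑ v, ∑ u, P v u * f t u ^ 2 = a t := by
      rw [Finset.sum_comm]
      simp only [ha]
      refine Finset.sum_congr rfl fun u _ => ?_
      rw [← Finset.sum_mul, hcol, one_mul]
    have t3 : ∑ v, ∑ u, 2 * (f t v * (P v u * f t u)) =
        2 * ∑ v, f t v * f (t + 1) v := by
      rw [Finset.mul_sum]
      refine Finset.sum_congr rfl fun v _ => ?_
      rw [hfsucc t v, Finset.mul_sum, Finset.mul_sum]
    rw [t1, t2, t3]; ring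
  -- pointwise bound: pmin * S t ≤ 2 * (a t - a (t+1))
  have hptb : ∀ t, pmin * S t ≤ 2 * (a t - a (t + 1)) := by
    intro t
    have h1 : pmin * S t ≤ ∑ v, ∑ u, P v u * (f t v - f t u) ^ 2 := by
      rw [hS, Finset.mul_sum]
      refine Finset.sum_le_sum fun v _ => ?_
      rw [Finset.mul_sum]
      refine Finset.sum_le_sum fun u _ => ?_
      split
      · next h => exact mul_le_mul_of_nonneg_right (hpmin v u h) (sq_nonneg _)
      · next h =>
        simp only [mul_zero]
        exact mul_nonneg (hnn v u) (sq_nonneg _)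
    calc pmin * S t ≤ ∑ v, ∑ u, P v u * (f t v - f t u) ^ 2 := h1
      _ = 2 * a t - 2 * ∑ v, f t v * f (t + 1) v := hdir t
      _ ≤ 2 * (a t - a (t + 1)) := by linarith [hkey t]
  -- partial sums
  have hpart : ∀ T : ℕ, ∑ t ∈ Finset.range T, S t ≤ 2 / pmin := by
    intro T
    have h1 : pmin * ∑ t ∈ Finset.range T, S t ≤ 2 * (a 0 - a T) := by
      rw [Finset.mul_sum]
      calc ∑ t ∈ Finset.range T, pmin * S t
          ≤ ∑ t ∈ Finset.range T, 2 * (a t - a (t + 1)) :=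
            Finset.sum_le_sum fun t _ => hptb t
        _ = 2 * (a 0 - a T) := by
            rw [← Finset.mul_sum, Finset.sum_range_sub' a]
    have h2 : pmin * ∑ t ∈ Finset.range T, S t ≤ 2 := by
      have := hann T
      linarith [h1, ha0 ▸ h1]
    rw [le_div_iff₀ hpminpos]
    linarith [h2]
  have hsum : Summable S := summable_of_sum_range_le hSnn hpart
  exact ⟨hsum, Summable.tsum_le_of_sum_range_le hsum hpart⟩
end

section
/- Let G = (V,E) be a connected d-regular graph and let P be the lazy random walk transition matrix: P(v,u) = 1/(2d) for {v,u} ∈ E, P(v,v) = 1/2, and P(v,u) = 0 otherwise. Then Ψ_2(P) ≤ 2√d. -/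
open Finset Matrix

/-- A symmetric matrix with nonnegative entries and row sums at most 1 is an
`ℓ²` contraction. -/
lemma matrix_contraction_aux {V : Type*} [Fintype V]
    (M : Matrix V V ℝ) (hs : ∀ v u, M v u = M u v)
    (h0 : ∀ v u, 0 ≤ M v u) (h1 : ∀ v, ∑ u, M v u ≤ 1) (g : V → ℝ) :
    ∑ v, (M.mulVec g v) ^ 2 ≤ ∑ v, (g v) ^ 2 := by
  have key : ∀ v, (M.mulVec g v) ^ 2 ≤ ∑ u, M v u * (g u) ^ 2 := by
    intro v
    have cs := sum_sq_le_sum_mul_sum_of_sq_eq_mul Finset.univ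
      (r := fun u => M v u * g u) (f := fun u => M v u) (g := fun u => M v u * (g u) ^ 2)
      (fun u _ => h0 v u) (fun u _ => mul_nonneg (h0 v u) (sq_nonneg _))
      (fun u _ => by ring)
    have hX : 0 ≤ ∑ u, M v u * (g u) ^ 2 :=
      Finset.sum_nonneg fun u _ => mul_nonneg (h0 v u) (sq_nonneg _)
    calc (M.mulVec g v) ^ 2 = (∑ u, M v u * g u) ^ 2 := by
          simp [Matrix.mulVec, dotProduct]
      _ ≤ (∑ u, M v u) * ∑ u, M v u * (g u) ^ 2 := cs
      _ ≤ 1 * ∑ u, M v u * (g u) ^ 2 := mul_le_mul_of_nonneg_right (h1 v) hX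
      _ = _ := one_mul _
  calc ∑ v, (M.mulVec g v) ^ 2 ≤ ∑ v, ∑ u, M v u * (g u) ^ 2 :=
        Finset.sum_le_sum fun v _ => key v
    _ = ∑ u, (∑ v, M u v) * (g u) ^ 2 := by
        rw [Finset.sum_comm]
        exact Finset.sum_congr rfl fun u _ => by
          rw [← Finset.sum_mul]
          congr 1
          exact Finset.sum_congr rfl fun v _ => hs v u
    _ ≤ ∑ u, 1 * (g u) ^ 2 :=
        Finset.sum_le_sum fun u _ => mul_le_mul_of_nonneg_right (h1 u) (sq_nonneg _)
    _ = _ := by simp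

/-- For the lazy random walk on a connected d-regular graph, Ψ₂(P) ≤ 2√d. -/
theorem local_two_divergence_lazy_regular
    {V : Type*} [Fintype V] [DecidableEq V]
    (G : SimpleGraph V) [DecidableRel G.Adj]
    (hconn : G.Connected)
    (d : ℕ) (hreg : ∀ v, G.degree v = d)
    (P : Matrix V V ℝ)
    (hP : ∀ v u, P v u =
      if G.Adj v u then 1 / (2 * (d : ℝ)) else if v = u then 1 / 2 else 0)
    (w : V) :
    Summable (fun t : ℕ =>
      ∑ v, ∑ u, if 0 < P v u then ((P ^ t) v w - (P ^ t) u w) ^ 2 else 0) ∧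
    Real.sqrt (∑' t : ℕ,
      ∑ v, ∑ u, if 0 < P v u then ((P ^ t) v w - (P ^ t) u w) ^ 2 else 0)
      ≤ 2 * Real.sqrt d := by
  classical
  set s : ℕ → ℝ := fun t =>
    ∑ v, ∑ u, if 0 < P v u then ((P ^ t) v w - (P ^ t) u w) ^ 2 else 0 with hs_def
  -- degree facts
  have hdeg : ∀ v u, G.Adj v u → (1 : ℝ) ≤ (d : ℝ) := by
    intro v u h
    have : 0 < G.degree v := by
      rw [G.degree_pos_iff_exists_adj]
      exact ⟨u, h⟩
    rw [hreg v] at this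
    exact_mod_cast this
  have hdhalf : (d : ℝ) * (1 / (2 * (d : ℝ))) ≤ 1 / 2 := by
    rcases Nat.eq_zero_or_pos d with h | h
    · simp [h]
    · have hd0 : (d : ℝ) ≠ 0 := by positivity
      rw [show (d : ℝ) * (1 / (2 * (d : ℝ))) = 1 / 2 by field_simp]
  -- row sums of P
  have hProw : ∀ v, ∑ u, P v u = (d : ℝ) * (1 / (2 * (d : ℝ))) + 1 / 2 := by
    intro v
    have hsplit : ∀ u, P v u =
        (if G.Adj v u then 1 / (2 * (d : ℝ)) else 0) + (if v = u then 1 / 2 else 0) := by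
      intro u
      rw [hP]
      by_cases h : G.Adj v u
      · simp [h, (G.ne_of_adj h)]
      · simp [h]
    rw [Finset.sum_congr rfl fun u _ => hsplit u, Finset.sum_add_distrib]
    congr 1
    · rw [← Finset.sum_filter, Finset.sum_const,
        ← SimpleGraph.neighborFinset_eq_filter, G.card_neighborFinset_eq_degree, hreg v,
        nsmul_eq_mul]
    · simp
  have hProw_le : ∀ v, ∑ u, P v u ≤ 1 := by
    intro v; rw [hProw]; linarith
  have hP0 : ∀ v u, 0 ≤ P v u := by
    intro v u; rw [hP]; split_ifs <;> positivity
  have hPsym : ∀ v u, P v u = P u v := by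
    intro v u
    rw [hP, hP]
    by_cases h : G.Adj v u
    · rw [if_pos h, if_pos (G.adj_symm h)]
    · have h' : ¬ G.Adj u v := fun hh => h (G.adj_symm hh)
      rw [if_neg h, if_neg h']
      by_cases h2 : v = u
      · rw [if_pos h2, if_pos h2.symm]
      · rw [if_neg h2, if_neg (fun hh => h2 hh.symm)]
  -- the matrix Q = 2P - I
  set Q : Matrix V V ℝ := fun v u => 2 * P v u - (if v = u then 1 else 0) with hQ
  have hQ0 : ∀ v u, 0 ≤ Q v u := by
    intro v u
    simp only [hQ]
    rw [hP]
    by_cases h : G.Adj v u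
    · have hne : v ≠ u := G.ne_of_adj h
      simp only [if_pos h, if_neg hne, sub_zero]
      positivity
    · by_cases h2 : v = u <;> simp [h, h2]
  have hQsym : ∀ v u, Q v u = Q u v := by
    intro v u
    simp only [hQ, hPsym v u]
    congr 1
    simp [eq_comm]
  have hQrow : ∀ v, ∑ u, Q v u ≤ 1 := by
    intro v
    have hsplit : ∑ u, Q v u = 2 * (∑ u, P v u) - 1 := by
      simp only [hQ]
      rw [Finset.sum_sub_distrib, ← Finset.mul_sum]
      simp
    rw [hsplit, hProw]
    linarith
  have hQmul : ∀ (x : V → ℝ) (v : V), Q.mulVec x v = 2 * P.mulVec x v - x v := by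
    intro x v
    simp only [hQ, Matrix.mulVec, dotProduct, sub_mul, Finset.sum_sub_distrib, mul_assoc,
      ← Finset.mul_sum]
    congr 1
    simp [ite_mul]
  -- the walk functions
  set e : V → ℝ := fun v => if v = w then 1 else 0 with he
  set g : ℕ → V → ℝ := fun t => (P ^ t).mulVec e with hg_def
  have hg : ∀ t v, g t v = (P ^ t) v w := by
    intro t v
    simp only [hg_def, he, Matrix.mulVec, dotProduct, mul_ite, mul_one, mul_zero]
    simp
  have hgsucc : ∀ t, g (t + 1) = P.mulVec (g t) := by
    intro t
    simp only [hg_def, pow_succ']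
    rw [Matrix.mulVec_mulVec]
  set uS : ℕ → ℝ := fun t => ∑ v, (g t v) ^ 2 with huS
  set mS : ℕ → ℝ := fun t => ∑ v, g t v * P.mulVec (g t) v with hmS
  have hPcon : ∀ x : V → ℝ, ∑ v, (P.mulVec x v) ^ 2 ≤ ∑ v, (x v) ^ 2 :=
    fun x => matrix_contraction_aux P hPsym hP0 hProw_le x
  have hQcon : ∀ x : V → ℝ, ∑ v, (Q.mulVec x v) ^ 2 ≤ ∑ v, (x v) ^ 2 :=
    fun x => matrix_contraction_aux Q hQsym hQ0 hQrow x
  have hc1 : ∀ t, mS t ≤ uS t := by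
    intro t
    have h1 : 2 * mS t ≤ uS t + ∑ v, (P.mulVec (g t) v) ^ 2 := by
      simp only [hmS, huS]
      rw [Finset.mul_sum, ← Finset.sum_add_distrib]
      refine Finset.sum_le_sum fun v _ => ?_
      nlinarith [sq_nonneg (g t v - P.mulVec (g t) v)]
    have h2 := hPcon (g t)
    linarith
  have hc2 : ∀ t, uS (t + 1) ≤ mS t := by
    intro t
    have h1 := hQcon (g t)
    have h2 : ∀ v, (Q.mulVec (g t) v) ^ 2 =
        4 * (P.mulVec (g t) v) ^ 2 - 4 * (g t v * P.mulVec (g t) v) + (g t v) ^ 2 := by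
      intro v; rw [hQmul]; ring
    rw [Finset.sum_congr rfl fun v _ => h2 v, Finset.sum_add_distrib,
      Finset.sum_sub_distrib, ← Finset.mul_sum, ← Finset.mul_sum] at h1
    have h3 : uS (t + 1) = ∑ v, (P.mulVec (g t) v) ^ 2 := by
      simp only [huS, hgsucc t]
    simp only [hmS, huS] at *
    linarith
  have huT : ∀ T, 0 ≤ uS T := fun T => Finset.sum_nonneg fun v _ => sq_nonneg _
  have htel : ∀ T, ∑ t ∈ Finset.range T, (uS t - mS t) ≤ uS 0 - uS T := by
    intro T
    induction T with
    | zero => simp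
    | succ T ih =>
      rw [Finset.sum_range_succ]
      have := hc2 T
      linarith
  have hu0 : uS 0 = 1 := by
    have hg0 : ∀ v, g 0 v = if v = w then 1 else 0 := by
      intro v; rw [hg, pow_zero, Matrix.one_apply]
    simp only [huS]
    rw [Finset.sum_congr rfl fun v _ => by rw [hg0 v]]
    simp [apply_ite (fun x : ℝ => x ^ 2)]
  -- the adjacency identity
  have hA_entry : ∀ v u, (if G.Adj v u then (1 : ℝ) else 0)
      = 2 * d * P v u - (if v = u then (d : ℝ) else 0) := by
    intro v u
    rw [hP]
    by_cases h : G.Adj v u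
    · have h1 : (1 : ℝ) ≤ d := hdeg v u h
      have hne : v ≠ u := G.ne_of_adj h
      have hd0 : (d : ℝ) ≠ 0 := by linarith
      simp only [if_pos h, if_neg hne, sub_zero]
      field_simp
    · by_cases h2 : v = u <;> simp [h, h2] <;> ring
  have hArow : ∀ v, ∑ u, (if G.Adj v u then (1 : ℝ) else 0) = d := by
    intro v
    rw [← Finset.sum_filter, Finset.sum_const,
      ← SimpleGraph.neighborFinset_eq_filter, G.card_neighborFinset_eq_degree, hreg v,
      nsmul_eq_mul, mul_one]
  have hAcol : ∀ u, ∑ v, (if G.Adj v u then (1 : ℝ) else 0) = d := by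
    intro u
    have hflip : ∀ v, (if G.Adj v u then (1 : ℝ) else 0) = (if G.Adj u v then (1 : ℝ) else 0) := by
      intro v
      by_cases h : G.Adj v u
      · rw [if_pos h, if_pos (G.adj_symm h)]
      · rw [if_neg h, if_neg (fun hh => h (G.adj_symm hh))]
    rw [Finset.sum_congr rfl fun v _ => hflip v, hArow u]
  have hAf : ∀ (f : V → ℝ) (v : V),
      ∑ u, (if G.Adj v u then (1 : ℝ) else 0) * f u
        = 2 * d * P.mulVec f v - d * f v := by
    intro f v
    rw [Finset.sum_congr rfl fun u _ => by rw [hA_entry v u]]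
    simp only [sub_mul, Finset.sum_sub_distrib]
    congr 1
    · rw [Finset.sum_congr rfl fun u _ =>
          show 2 * (d : ℝ) * P v u * f u = 2 * d * (P v u * f u) from by ring,
        ← Finset.mul_sum]
      simp [Matrix.mulVec, dotProduct]
    · simp [ite_mul]
    -- rewrite the positivity condition in terms of adjacency
  have hstep1 : ∀ t, s t = ∑ v, ∑ u, (if G.Adj v u then (1 : ℝ) else 0) * (g t v - g t u) ^ 2 := by
    intro t
    simp only [hs_def]
    refine Finset.sum_congr rfl fun v _ => Finset.sum_congr rfl fun u _ => ?_
    rw [← hg t v, ← hg t u]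
    by_cases h : G.Adj v u
    · have h1 : (1 : ℝ) ≤ d := hdeg v u h
      have hpos : 0 < P v u := by
        rw [hP, if_pos h]
        have : (0 : ℝ) < 2 * d := by linarith
        exact div_pos one_pos this
      rw [if_pos hpos, if_pos h, one_mul]
    · by_cases h2 : v = u
      · subst h2
        simp [h]
      · have hz : P v u = 0 := by rw [hP, if_neg h, if_neg h2]
        simp [hz, h]
  -- main identity : s t = 4d (uS t - mS t)
  have hmain : ∀ t, s t = 4 * d * (uS t - mS t) := by
    intro t
    rw [hstep1 t]
    have inner : ∀ v, ∑ u, (if G.Adj v u then (1 : ℝ) else 0) * (g t v - g t u) ^ 2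
        = (d : ℝ) * (g t v) ^ 2
          - 2 * (g t v * (2 * d * P.mulVec (g t) v - d * g t v))
          + ∑ u, (if G.Adj v u then (1 : ℝ) else 0) * (g t u) ^ 2 := by
      intro v
      have hpt : ∀ u, (if G.Adj v u then (1 : ℝ) else 0) * (g t v - g t u) ^ 2
          = (if G.Adj v u then (1 : ℝ) else 0) * (g t v) ^ 2
            - 2 * (g t v * ((if G.Adj v u then (1 : ℝ) else 0) * g t u))
            + (if G.Adj v u then (1 : ℝ) else 0) * (g t u) ^ 2 := fun u => by ring
      rw [Finset.sum_congr rfl fun u _ => hpt u, Finset.sum_add_distrib,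
        Finset.sum_sub_distrib]
      congr 2
      · rw [Finset.sum_congr rfl fun u _ =>
            show (if G.Adj v u then (1 : ℝ) else 0) * (g t v) ^ 2
              = (g t v) ^ 2 * (if G.Adj v u then (1 : ℝ) else 0) from by ring,
          ← Finset.mul_sum, hArow v]
        ring
      · rw [Finset.sum_congr rfl fun u _ =>
            show 2 * (g t v * ((if G.Adj v u then (1 : ℝ) else 0) * g t u))
              = 2 * g t v * ((if G.Adj v u then (1 : ℝ) else 0) * g t u) from by ring,
          ← Finset.mul_sum, hAf (g t) v]
        ring
    rw [Finset.sum_congr rfl fun v _ => inner v, Finset.sum_add_distrib,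
      Finset.sum_sub_distrib]
    have hlast : ∑ v, ∑ u, (if G.Adj v u then (1 : ℝ) else 0) * (g t u) ^ 2
        = d * uS t := by
      rw [Finset.sum_comm]
      rw [Finset.sum_congr rfl fun u _ => by
        rw [← Finset.sum_mul, hAcol u]]
      simp only [huS]
      rw [Finset.mul_sum]
    rw [hlast]
    have h1 : ∑ v, (d : ℝ) * (g t v) ^ 2 = d * uS t := by
      simp only [huS]; rw [Finset.mul_sum]
    have h2 : ∑ v, 2 * (g t v * (2 * d * P.mulVec (g t) v - d * g t v))
        = 4 * d * mS t - 2 * d * uS t := by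
      rw [Finset.sum_congr rfl fun v _ =>
        show 2 * (g t v * (2 * (d : ℝ) * P.mulVec (g t) v - d * g t v))
          = 4 * d * (g t v * P.mulVec (g t) v) - 2 * d * (g t v) ^ 2 from by ring,
        Finset.sum_sub_distrib, ← Finset.mul_sum, ← Finset.mul_sum]
    rw [h1, h2]
    ring
  -- assembly
  have hs_nonneg : ∀ t, 0 ≤ s t := by
    intro t
    rw [hmain t]
    have := hc1 t
    have hd : (0 : ℝ) ≤ d := Nat.cast_nonneg d
    nlinarith
  have hpartial : ∀ T, ∑ t ∈ Finset.range T, s t ≤ 4 * d := by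
    intro T
    have heq : ∑ t ∈ Finset.range T, s t
        = 4 * d * ∑ t ∈ Finset.range T, (uS t - mS t) := by
      rw [Finset.mul_sum]
      exact Finset.sum_congr rfl fun t _ => hmain t
    have hb : ∑ t ∈ Finset.range T, (uS t - mS t) ≤ 1 := by
      linarith [htel T, huT T, hu0]
    rw [heq]
    calc 4 * (d : ℝ) * ∑ t ∈ Finset.range T, (uS t - mS t) ≤ 4 * d * 1 := by
          refine mul_le_mul_of_nonneg_left hb ?_
          positivity
      _ = 4 * d := mul_one _
  have hsum : Summable s := summable_of_sum_range_le hs_nonneg hpartial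
  refine ⟨hsum, ?_⟩
  have htsum : ∑' t, s t ≤ 4 * d := Real.tsum_le_of_sum_range_le hs_nonneg hpartial
  calc Real.sqrt (∑' t, s t) ≤ Real.sqrt (4 * d) := Real.sqrt_le_sqrt htsum
    _ = 2 * Real.sqrt d := by
        rw [show (4 : ℝ) * d = (2 * Real.sqrt d) ^ 2 by
          rw [mul_pow, Real.sq_sqrt (Nat.cast_nonneg d)]; norm_num]
        exact Real.sqrt_sq (by positivity)
end

section
/- Let G = (V,E) be a connected graph with maximum degree d_max and let P_M be the lazy Metropolis chain: P_M(v,u) = 1/(2 max{d_v, d_u}) for {v,u} ∈ E, P_M(v,v) = 1 − Σ_{u: {v,u}∈E} P_M(v,u), and 0 otherwise. Then Ψ_2(P_M) ≤ 2√(d_max). -/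
/-- Row-wise Cauchy–Schwarz: for a nonnegative weight vector summing to 1,
the square of the weighted average is at most the weighted average of squares. -/
lemma jensen_row {V : Type*} [Fintype V] (Q f : V → ℝ)
    (hnn : ∀ u, 0 ≤ Q u) (hsum : ∑ u, Q u = 1) :
    (∑ u, Q u * f u) ^ 2 ≤ ∑ u, Q u * f u ^ 2 := by
  have h := Finset.sum_mul_sq_le_sq_mul_sq Finset.univ
    (fun u => Real.sqrt (Q u)) (fun u => Real.sqrt (Q u) * f u)
  have h1 : ∀ u, Real.sqrt (Q u) * (Real.sqrt (Q u) * f u) = Q u * f u := by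
    intro u
    rw [← mul_assoc, Real.mul_self_sqrt (hnn u)]
  have h2 : ∀ u, Real.sqrt (Q u) ^ 2 = Q u := fun u => Real.sq_sqrt (hnn u)
  have h3 : ∀ u, (Real.sqrt (Q u) * f u) ^ 2 = Q u * f u ^ 2 := by
    intro u; rw [mul_pow, h2]
  simp only [h1, h2, h3] at h
  calc (∑ u, Q u * f u) ^ 2 ≤ (∑ u, Q u) * ∑ u, Q u * f u ^ 2 := h
    _ = ∑ u, Q u * f u ^ 2 := by rw [hsum, one_mul]

/-- A symmetric doubly-substochastic (stochastic) matrix is an ℓ²-contraction. -/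
lemma stoch_contract {V : Type*} [Fintype V] (Q : Matrix V V ℝ) (f : V → ℝ)
    (hsym : ∀ v u, Q v u = Q u v) (hnn : ∀ v u, 0 ≤ Q v u)
    (hrow : ∀ v, ∑ u, Q v u = 1) :
    ∑ v, (∑ u, Q v u * f u) ^ 2 ≤ ∑ v, f v ^ 2 := by
  have step1 : ∑ v, (∑ u, Q v u * f u) ^ 2 ≤ ∑ v, ∑ u, Q v u * f u ^ 2 :=
    Finset.sum_le_sum (fun v _ => jensen_row (Q v) f (hnn v) (hrow v))
  have step2 : ∑ v, ∑ u, Q v u * f u ^ 2 = ∑ u, f u ^ 2 := by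
    rw [Finset.sum_comm]
    refine Finset.sum_congr rfl (fun u _ => ?_)
    have : ∑ v, Q v u * f u ^ 2 = (∑ v, Q v u) * f u ^ 2 := by
      rw [Finset.sum_mul]
    rw [this]
    have : ∑ v, Q v u = 1 := by
      rw [show (∑ v, Q v u) = ∑ v, Q u v from Finset.sum_congr rfl
        (fun v _ => hsym v u), hrow u]
    rw [this, one_mul]
  exact step1.trans (le_of_eq step2)

/-- Key contraction inequality for a symmetric stochastic lazy matrix:
    ‖Pf‖² ≤ ⟨f, Pf⟩. -/
lemma lazy_contract {V : Type*} [Fintype V] [DecidableEq V]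
    (P : Matrix V V ℝ) (f : V → ℝ)
    (hsym : ∀ v u, P v u = P u v) (hnn : ∀ v u, 0 ≤ P v u)
    (hrow : ∀ v, ∑ u, P v u = 1) (hdiag : ∀ v, 1/2 ≤ P v v) :
    ∑ v, (∑ u, P v u * f u) ^ 2 ≤ ∑ v, f v * (∑ u, P v u * f u) := by
  set Q : Matrix V V ℝ := fun v u => 2 * P v u - (if v = u then 1 else 0) with hQ
  have hQsym : ∀ v u, Q v u = Q u v := by
    intro v u
    show 2 * P v u - (if v = u then 1 else 0) = 2 * P u v - (if u = v then 1 else 0)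
    rw [hsym v u]
    by_cases h : v = u
    · rw [if_pos h, if_pos h.symm]
    · rw [if_neg h, if_neg (fun he => h he.symm)]
  have hQnn : ∀ v u, 0 ≤ Q v u := by
    intro v u
    show 0 ≤ 2 * P v u - (if v = u then 1 else 0)
    by_cases h : v = u
    · subst h; rw [if_pos rfl]; linarith [hdiag v]
    · rw [if_neg h]; linarith [hnn v u]
  have hQrow : ∀ v, ∑ u, Q v u = 1 := by
    intro v
    simp only [hQ]
    rw [Finset.sum_sub_distrib, ← Finset.mul_sum, hrow,
      Finset.sum_ite_eq Finset.univ v (fun _ => (1:ℝ)), if_pos (Finset.mem_univ v)]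
    ring
  have hg : ∀ v, (∑ u, Q v u * f u) = 2 * (∑ u, P v u * f u) - f v := by
    intro v
    simp only [hQ, sub_mul, ite_mul, one_mul, zero_mul]
    rw [Finset.sum_sub_distrib]
    congr 1
    · rw [Finset.mul_sum]; exact Finset.sum_congr rfl (fun u _ => by ring)
    · exact (Finset.sum_ite_eq Finset.univ v f).trans (if_pos (Finset.mem_univ v))
  have hcontr := stoch_contract Q f hQsym hQnn hQrow
  simp only [hg] at hcontr
  -- (Pf v)^2 ≤ f v * Pf v + ((2 Pf v - f v)^2 - f v ^2)/4 ... algebra: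
  -- f v * Pf v - (Pf v)^2 = (f v ^ 2 - (2 Pf v - f v)^2) / 4
  have key : ∀ v, f v * (∑ u, P v u * f u) - (∑ u, P v u * f u) ^ 2
      = (f v ^ 2 - (2 * (∑ u, P v u * f u) - f v) ^ 2) / 4 := by
    intro v; ring
  have : ∑ v, (f v * (∑ u, P v u * f u) - (∑ u, P v u * f u) ^ 2)
      = (∑ v, f v ^ 2 - ∑ v, (2 * (∑ u, P v u * f u) - f v) ^ 2) / 4 := by
    rw [Finset.sum_congr rfl (fun v _ => key v), ← Finset.sum_div,
      Finset.sum_sub_distrib]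
  have hfinal : 0 ≤ ∑ v, (f v * (∑ u, P v u * f u) - (∑ u, P v u * f u) ^ 2) := by
    rw [this]; linarith
  rw [Finset.sum_sub_distrib] at hfinal
  linarith

/-- For the lazy Metropolis chain on a connected graph with maximum degree
    d_max, Ψ₂(P_M) ≤ 2√(d_max). -/
theorem local_two_divergence_metropolis
    {V : Type*} [Fintype V] [DecidableEq V]
    (G : SimpleGraph V) [DecidableRel G.Adj]
    (hconn : G.Connected)
    (dmax : ℕ) (hdmax : ∀ v, G.degree v ≤ dmax)
    (P : Matrix V V ℝ)
    (hP : ∀ v u, P v u =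
      if G.Adj v u then 1 / (2 * (max (G.degree v) (G.degree u) : ℝ))
      else if v = u then
        1 - ∑ u' ∈ G.neighborFinset v,
              1 / (2 * (max (G.degree v) (G.degree u') : ℝ))
      else 0)
    (w : V) :
    Summable (fun t : ℕ =>
      ∑ v, ∑ u, if 0 < P v u then ((P ^ t) v w - (P ^ t) u w) ^ 2 else 0) ∧
    Real.sqrt (∑' t : ℕ,
      ∑ v, ∑ u, if 0 < P v u then ((P ^ t) v w - (P ^ t) u w) ^ 2 else 0)
      ≤ 2 * Real.sqrt dmax := by
  classical
  -- abbreviations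
  set S : ℕ → ℝ := fun t =>
    ∑ v, ∑ u, if 0 < P v u then ((P ^ t) v w - (P ^ t) u w) ^ 2 else 0 with hS
  -- basic facts about P
  have hPdiag : ∀ v, P v v = 1 - ∑ u' ∈ G.neighborFinset v,
      1 / (2 * (max (G.degree v) (G.degree u') : ℝ)) := by
    intro v
    rw [hP v v, if_neg (G.irrefl), if_pos rfl]
  have hdegpos : ∀ {v u}, G.Adj v u → 0 < G.degree v := by
    intro v u h
    exact (G.degree_pos_iff_exists_adj v).2 ⟨u, h⟩
  have hdiag : ∀ v, 1/2 ≤ P v v := by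
    intro v
    rw [hPdiag v]
    rcases Nat.eq_zero_or_pos (G.degree v) with h0 | hpos
    · have : G.neighborFinset v = ∅ := Finset.card_eq_zero.mp
        (by rw [G.card_neighborFinset_eq_degree]; exact h0)
      rw [this, Finset.sum_empty]; norm_num
    · have hb : ∀ u ∈ G.neighborFinset v,
          1 / (2 * (max (G.degree v) (G.degree u) : ℝ)) ≤ 1 / (2 * (G.degree v : ℝ)) := by
        intro u _
        apply one_div_le_one_div_of_le
        · positivity
        · have : (G.degree v : ℝ) ≤ max (G.degree v : ℝ) (G.degree u : ℝ) :=
            le_max_left _ _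
          linarith
      have := Finset.sum_le_sum hb
      rw [Finset.sum_const, SimpleGraph.card_neighborFinset_eq_degree] at this
      have heq : (G.degree v : ℝ) * (1 / (2 * (G.degree v : ℝ))) = 1/2 := by
        have : (G.degree v : ℝ) ≠ 0 := by positivity
        field_simp
      rw [nsmul_eq_mul, heq] at this
      linarith
  have hnn : ∀ v u, 0 ≤ P v u := by
    intro v u
    rw [hP v u]
    split_ifs with h1 h2
    · positivity
    · subst h2
      have := hdiag v
      rw [hPdiag v] at this
      linarith
    · exact le_rfl
  have hrow : ∀ v, ∑ u, P v u = 1 := by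
    intro v
    have key : ∀ u, P v u =
        (if u ∈ G.neighborFinset v then
          1 / (2 * (max (G.degree v) (G.degree u) : ℝ)) else 0)
        + (if u = v then P v v else 0) := by
      intro u
      by_cases h : G.Adj v u
      · have hm : u ∈ G.neighborFinset v := (G.mem_neighborFinset v u).2 h
        have hne : u ≠ v := fun he => G.irrefl (he ▸ h)
        rw [hP v u, if_pos h, if_pos hm, if_neg hne, add_zero]
      · by_cases he : u = v
        · subst he
          have : u ∉ G.neighborFinset u := by
            rw [G.mem_neighborFinset]; exact G.irrefl
          rw [if_neg this, if_pos rfl, zero_add]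
        · have hm : u ∉ G.neighborFinset v := by
            rw [G.mem_neighborFinset]; exact h
          rw [hP v u, if_neg h, if_neg (fun hvu => he hvu.symm), if_neg hm,
            if_neg he, add_zero]
    rw [Finset.sum_congr rfl (fun u _ => key u), Finset.sum_add_distrib]
    rw [Finset.sum_ite_eq' Finset.univ v (fun _ => P v v), if_pos (Finset.mem_univ v)]
    rw [Finset.sum_ite_mem, Finset.univ_inter, hPdiag v]
    ring
  have hsym : ∀ v u, P v u = P u v := by
    intro v u
    by_cases h : G.Adj v u
    · rw [hP v u, hP u v, if_pos h, if_pos h.symm, max_comm]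
    · by_cases he : v = u
      · subst he; rfl
      · rw [hP v u, hP u v, if_neg h,
          if_neg (show ¬G.Adj u v from fun h' => h h'.symm),
          if_neg he, if_neg (show ¬u = v from fun h' => he h'.symm)]
  have hlb : ∀ v u, v ≠ u → 0 < P v u → 1 ≤ 2 * (dmax : ℝ) * P v u := by
    intro v u hne hpos
    have hadj : G.Adj v u := by
      by_contra h
      rw [hP v u, if_neg h, if_neg hne] at hpos
      exact lt_irrefl 0 hpos
    have hd1 : 0 < G.degree v := hdegpos hadj
    have hM : (0:ℝ) < max (G.degree v : ℝ) (G.degree u : ℝ) := by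
      have h1 : (0:ℝ) < (G.degree v : ℝ) := by exact_mod_cast hd1
      exact lt_of_lt_of_le h1 (le_max_left _ _)
    have hMd : max (G.degree v : ℝ) (G.degree u : ℝ) ≤ (dmax : ℝ) := by
      have h1 : (G.degree v : ℝ) ≤ (dmax : ℝ) := by exact_mod_cast hdmax v
      have h2 : (G.degree u : ℝ) ≤ (dmax : ℝ) := by exact_mod_cast hdmax u
      exact max_le h1 h2
    rw [hP v u, if_pos hadj, mul_one_div, one_le_div (by positivity)]
    linarith
  -- the energy E t = ‖P^t δ_w‖²
  set E : ℕ → ℝ := fun t => ∑ v, ((P ^ t) v w) ^ 2 with hE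
  have hfsucc : ∀ t v, (P ^ (t+1)) v w = ∑ u, P v u * (P ^ t) u w := by
    intro t v
    rw [pow_succ', Matrix.mul_apply]
  have hE0 : E 0 = 1 := by
    simp only [hE, pow_zero, Matrix.one_apply]
    have hsq : ∀ v : V, ((if v = w then (1:ℝ) else 0)) ^ 2
        = (if v = w then (1:ℝ) else 0) := by
      intro v; split_ifs <;> norm_num
    rw [Finset.sum_congr rfl (fun v _ => hsq v),
      Finset.sum_ite_eq' Finset.univ w (fun _ => (1:ℝ)), if_pos (Finset.mem_univ w)]
  have hEnn : ∀ t, 0 ≤ E t := by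
    intro t
    exact Finset.sum_nonneg (fun v _ => sq_nonneg _)
  -- A t = ⟨f_t, P f_t⟩
  set A : ℕ → ℝ := fun t => ∑ v, (P ^ t) v w * (∑ u, P v u * (P ^ t) u w) with hA
  have hcontr : ∀ t, E (t+1) ≤ A t := by
    intro t
    have : E (t+1) = ∑ v, (∑ u, P v u * (P ^ t) u w) ^ 2 := by
      simp only [hE]
      exact Finset.sum_congr rfl (fun v _ => by rw [hfsucc t v])
    rw [this]
    exact lazy_contract P (fun v => (P ^ t) v w) hsym hnn hrow hdiag
  -- Dirichlet form expansion
  have hD : ∀ t, ∑ v, ∑ u, P v u * ((P ^ t) v w - (P ^ t) u w) ^ 2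
      = 2 * E t - 2 * A t := by
    intro t
    have expand : ∀ v u, P v u * ((P ^ t) v w - (P ^ t) u w) ^ 2
        = P v u * ((P ^ t) v w) ^ 2 + P v u * ((P ^ t) u w) ^ 2
          - 2 * ((P ^ t) v w * (P v u * (P ^ t) u w)) := by
      intro v u; ring
    have T1 : ∑ v, ∑ u, P v u * ((P ^ t) v w) ^ 2 = E t := by
      simp only [hE]
      refine Finset.sum_congr rfl (fun v _ => ?_)
      rw [← Finset.sum_mul, hrow v, one_mul]
    have T2 : ∑ v, ∑ u, P v u * ((P ^ t) u w) ^ 2 = E t := by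
      rw [Finset.sum_comm]
      simp only [hE]
      refine Finset.sum_congr rfl (fun u _ => ?_)
      rw [← Finset.sum_mul]
      rw [show (∑ v, P v u) = ∑ v, P u v from
        Finset.sum_congr rfl (fun v _ => hsym v u), hrow u, one_mul]
    have T3 : ∑ v, ∑ u, (P ^ t) v w * (P v u * (P ^ t) u w) = A t := by
      simp only [hA]
      refine Finset.sum_congr rfl (fun v _ => ?_)
      rw [Finset.mul_sum]
    calc ∑ v, ∑ u, P v u * ((P ^ t) v w - (P ^ t) u w) ^ 2
        = ∑ v, ∑ u, (P v u * ((P ^ t) v w) ^ 2 + P v u * ((P ^ t) u w) ^ 2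
          - 2 * ((P ^ t) v w * (P v u * (P ^ t) u w))) := by
          exact Finset.sum_congr rfl (fun v _ => Finset.sum_congr rfl
            (fun u _ => expand v u))
      _ = (∑ v, ∑ u, P v u * ((P ^ t) v w) ^ 2)
          + (∑ v, ∑ u, P v u * ((P ^ t) u w) ^ 2)
          - 2 * ∑ v, ∑ u, (P ^ t) v w * (P v u * (P ^ t) u w) := by
          simp only [Finset.sum_sub_distrib, Finset.sum_add_distrib,
            Finset.mul_sum]
      _ = 2 * E t - 2 * A t := by rw [T1, T2, T3]; ring
  -- pointwise bound: S t ≤ 2 dmax * Dirichlet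
  have hSbound : ∀ t, S t ≤ 2 * (dmax : ℝ) *
      (∑ v, ∑ u, P v u * ((P ^ t) v w - (P ^ t) u w) ^ 2) := by
    intro t
    rw [Finset.mul_sum]
    refine Finset.sum_le_sum (fun v _ => ?_)
    rw [Finset.mul_sum]
    refine Finset.sum_le_sum (fun u _ => ?_)
    by_cases hpos : 0 < P v u
    · rw [if_pos hpos]
      by_cases hvu : v = u
      · subst hvu
        simp only [sub_self]
        have : (0:ℝ) ^ 2 = 0 := by norm_num
        rw [this, mul_zero]
        positivity
      · have h1 := hlb v u hvu hpos
        have h2 : (0:ℝ) ≤ ((P ^ t) v w - (P ^ t) u w) ^ 2 := sq_nonneg _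
        nlinarith
    · rw [if_neg hpos]
      have := hnn v u
      positivity
  have hSnn : ∀ t, 0 ≤ S t := by
    intro t
    refine Finset.sum_nonneg (fun v _ => Finset.sum_nonneg (fun u _ => ?_))
    split_ifs
    · exact sq_nonneg _
    · exact le_refl 0
  have hdmaxnn : (0:ℝ) ≤ (dmax : ℝ) := Nat.cast_nonneg _
  -- per-step bound: S t ≤ 4 dmax (E t − E (t+1))
  have hstep : ∀ t, S t ≤ 4 * (dmax : ℝ) * (E t - E (t+1)) := by
    intro t
    have h1 := hSbound t
    rw [hD t] at h1
    have h2 := hcontr t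
    nlinarith
  -- partial sums are bounded by 4 dmax
  have hpartial : ∀ n, ∑ t ∈ Finset.range n, S t ≤ 4 * (dmax : ℝ) := by
    intro n
    calc ∑ t ∈ Finset.range n, S t
        ≤ ∑ t ∈ Finset.range n, 4 * (dmax : ℝ) * (E t - E (t+1)) :=
          Finset.sum_le_sum (fun t _ => hstep t)
      _ = 4 * (dmax : ℝ) * (E 0 - E n) := by
          rw [← Finset.mul_sum, Finset.sum_range_sub' E n]
      _ ≤ 4 * (dmax : ℝ) := by
          rw [hE0]
          nlinarith [hEnn n]
  have hsummable : Summable S := summable_of_sum_range_le hSnn hpartial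
  refine ⟨hsummable, ?_⟩
  have htsum : ∑' t, S t ≤ 4 * (dmax : ℝ) :=
    Summable.tsum_le_of_sum_range_le hsummable hpartial
  calc Real.sqrt (∑' t, S t) ≤ Real.sqrt (4 * (dmax : ℝ)) :=
        Real.sqrt_le_sqrt htsum
    _ = 2 * Real.sqrt dmax := by
        rw [show (4:ℝ) * (dmax:ℝ) = 2^2 * (dmax:ℝ) by ring,
          Real.sqrt_mul (by positivity), Real.sqrt_sq (by norm_num)]
end

section
/- Let P be an irreducible, reversible, lazy transition matrix on a finite set V with stationary distribution π. Then Σ_{t=0}^∞ E(P^t_{·,w}) ≤ π_w for every w ∈ V, where E denotes the Dirichlet form with respect to P and π. -/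
open Finset

section Aux

variable {V : Type*} [Fintype V] [DecidableEq V]

lemma aux_pow_entry_nonneg (P : Matrix V V ℝ) (hnn : ∀ v u, 0 ≤ P v u) :
    ∀ (t : ℕ) (v u : V), 0 ≤ (P ^ t) v u := by
  intro t
  induction t with
  | zero =>
    intro v u
    rw [pow_zero, Matrix.one_apply]
    split <;> norm_num
  | succ t ih =>
    intro v u
    rw [pow_succ, Matrix.mul_apply]
    exact Finset.sum_nonneg fun x _ => mul_nonneg (ih v x) (hnn x u)

lemma aux_rev_pow (P : Matrix V V ℝ) (π : V → ℝ)
    (hrev : ∀ v u, π v * P v u = π u * P u v) :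
    ∀ (t : ℕ) (v u : V), π v * (P ^ t) v u = π u * (P ^ t) u v := by
  intro t
  induction t with
  | zero =>
    intro v u
    rw [pow_zero, Matrix.one_apply, Matrix.one_apply]
    by_cases h : v = u
    · subst h; rfl
    · simp [h, Ne.symm h]
  | succ t ih =>
    intro v u
    conv_lhs => rw [pow_succ']
    conv_rhs => rw [pow_succ]
    rw [Matrix.mul_apply, Matrix.mul_apply, Finset.mul_sum, Finset.mul_sum]
    apply Finset.sum_congr rfl
    intro x _
    calc π v * (P v x * (P ^ t) x u) = (π v * P v x) * (P ^ t) x u := by ring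
    _ = (π x * P x v) * (P ^ t) x u := by rw [hrev]
    _ = P x v * (π x * (P ^ t) x u) := by ring
    _ = P x v * (π u * (P ^ t) u x) := by rw [ih]
    _ = π u * ((P ^ t) u x * P x v) := by ring

lemma aux_L1 (P : Matrix V V ℝ) (π : V → ℝ)
    (hrev : ∀ v u, π v * P v u = π u * P u v) (w : V) (t : ℕ) :
    ∑ v, π v * ((P ^ t) v w) ^ 2 = π w * (P ^ (2 * t)) w w := by
  have h2 : 2 * t = t + t := by ring
  rw [h2, pow_add, Matrix.mul_apply, Finset.mul_sum]
  apply Finset.sum_congr rfl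
  intro v _
  calc π v * ((P ^ t) v w) ^ 2 = (π v * (P ^ t) v w) * (P ^ t) v w := by ring
  _ = (π w * (P ^ t) w v) * (P ^ t) v w := by rw [aux_rev_pow P π hrev]
  _ = π w * ((P ^ t) w v * (P ^ t) v w) := by ring

lemma aux_L2 (P : Matrix V V ℝ) (π : V → ℝ)
    (hrev : ∀ v u, π v * P v u = π u * P u v) (w : V) (t : ℕ) :
    ∑ v, π v * ((P ^ t) v w * (P ^ (t + 1)) v w) = π w * (P ^ (2 * t + 1)) w w := by
  have h2 : 2 * t + 1 = t + (t + 1) := by ring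
  conv_rhs => rw [h2, pow_add, Matrix.mul_apply]
  rw [Finset.mul_sum]
  apply Finset.sum_congr rfl
  intro v _
  calc π v * ((P ^ t) v w * (P ^ (t + 1)) v w)
      = (π v * (P ^ t) v w) * (P ^ (t + 1)) v w := by ring
  _ = (π w * (P ^ t) w v) * (P ^ (t + 1)) v w := by rw [aux_rev_pow P π hrev]
  _ = π w * ((P ^ t) w v * (P ^ (t + 1)) v w) := by ring

lemma aux_E_ident (P : Matrix V V ℝ) (π : V → ℝ)
    (hrow : ∀ v, ∑ u, P v u = 1)
    (hstat : ∀ u, ∑ v, π v * P v u = π u)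
    (hrev : ∀ v u, π v * P v u = π u * P u v) (w : V) (t : ℕ) :
    (1 / 2 : ℝ) * ∑ v, ∑ u, ((P ^ t) v w - (P ^ t) u w) ^ 2 * (π v * P v u)
      = π w * (P ^ (2 * t)) w w - π w * (P ^ (2 * t + 1)) w w := by
  have hT1 : ∑ v, ∑ u, ((P ^ t) v w) ^ 2 * (π v * P v u)
      = π w * (P ^ (2 * t)) w w := by
    have h : ∀ v : V, ∑ u, ((P ^ t) v w) ^ 2 * (π v * P v u)
        = π v * ((P ^ t) v w) ^ 2 := by
      intro v
      calc ∑ u, ((P ^ t) v w) ^ 2 * (π v * P v u)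
          = ∑ u, (((P ^ t) v w) ^ 2 * π v) * P v u :=
            Finset.sum_congr rfl fun u _ => by ring
      _ = (((P ^ t) v w) ^ 2 * π v) * ∑ u, P v u := by rw [← Finset.mul_sum]
      _ = π v * ((P ^ t) v w) ^ 2 := by rw [hrow v]; ring
    rw [Finset.sum_congr rfl fun v _ => h v, aux_L1 P π hrev]
  have hT2 : ∑ v, ∑ u, ((P ^ t) u w) ^ 2 * (π v * P v u)
      = π w * (P ^ (2 * t)) w w := by
    rw [Finset.sum_comm]
    have h : ∀ u : V, ∑ v, ((P ^ t) u w) ^ 2 * (π v * P v u)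
        = π u * ((P ^ t) u w) ^ 2 := by
      intro u
      calc ∑ v, ((P ^ t) u w) ^ 2 * (π v * P v u)
          = ((P ^ t) u w) ^ 2 * ∑ v, π v * P v u := by rw [← Finset.mul_sum]
      _ = π u * ((P ^ t) u w) ^ 2 := by rw [hstat u]; ring
    rw [Finset.sum_congr rfl fun u _ => h u, aux_L1 P π hrev]
  have hT3 : ∑ v, ∑ u, ((P ^ t) v w * (P ^ t) u w) * (π v * P v u)
      = π w * (P ^ (2 * t + 1)) w w := by
    have h : ∀ v : V, ∑ u, ((P ^ t) v w * (P ^ t) u w) * (π v * P v u)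
        = π v * ((P ^ t) v w * (P ^ (t + 1)) v w) := by
      intro v
      have hp : (P ^ (t + 1)) v w = ∑ u, P v u * (P ^ t) u w := by
        rw [pow_succ', Matrix.mul_apply]
      rw [hp, Finset.mul_sum, Finset.mul_sum]
      exact Finset.sum_congr rfl fun u _ => by ring
    rw [Finset.sum_congr rfl fun v _ => h v, aux_L2 P π hrev]
  have key : ∑ v, ∑ u, ((P ^ t) v w - (P ^ t) u w) ^ 2 * (π v * P v u)
      = (∑ v, ∑ u, ((P ^ t) v w) ^ 2 * (π v * P v u))
        + (∑ v, ∑ u, ((P ^ t) u w) ^ 2 * (π v * P v u))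
        - 2 * ∑ v, ∑ u, ((P ^ t) v w * (P ^ t) u w) * (π v * P v u) := by
    simp only [Finset.mul_sum, ← Finset.sum_add_distrib, ← Finset.sum_sub_distrib]
    exact Finset.sum_congr rfl fun v _ => Finset.sum_congr rfl fun u _ => by ring
  rw [key, hT1, hT2, hT3]; ring

lemma aux_mono (P : Matrix V V ℝ) (π : V → ℝ)
    (hnn : ∀ v u, 0 ≤ P v u) (hrow : ∀ v, ∑ u, P v u = 1)
    (hπnn : ∀ v, 0 ≤ π v)
    (hstat : ∀ u, ∑ v, π v * P v u = π u)
    (hrev : ∀ v u, π v * P v u = π u * P u v)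
    (hlazy : ∀ v, (1 / 2 : ℝ) ≤ P v v) (w : V) (t : ℕ) :
    π w * (P ^ (2 * t + 2)) w w ≤ π w * (P ^ (2 * t + 1)) w w := by
  set g : V → ℝ := fun v => (P ^ t) v w with hg
  set Q : V → V → ℝ := fun v u => 2 * P v u - (if v = u then 1 else 0) with hQ
  set q : V → ℝ := fun v => ∑ u, Q v u * g u with hq
  have hQnn : ∀ v u, 0 ≤ Q v u := by
    intro v u
    simp only [hQ]
    by_cases h : v = u
    · subst h; rw [if_pos rfl]; linarith [hlazy v]
    · rw [if_neg h]; linarith [hnn v u]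
  have hQrow : ∀ v, ∑ u, Q v u = 1 := by
    intro v
    simp only [hQ]
    rw [Finset.sum_sub_distrib, ← Finset.mul_sum, hrow]
    simp only [Finset.sum_ite_eq, Finset.mem_univ, if_true]
    norm_num
  have hQcol : ∀ u, ∑ v, π v * Q v u = π u := by
    intro u
    simp only [hQ]
    have : ∀ v : V, π v * (2 * P v u - (if v = u then 1 else 0))
        = 2 * (π v * P v u) - (if v = u then π v else 0) := by
      intro v; split <;> ring
    rw [Finset.sum_congr rfl fun v _ => this v, Finset.sum_sub_distrib,
        ← Finset.mul_sum, hstat]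
    simp only [Finset.sum_ite_eq', Finset.mem_univ, if_true]
    ring
  have hPg : ∀ v, (P ^ (t + 1)) v w = (g v + q v) / 2 := by
    intro v
    rw [pow_succ', Matrix.mul_apply]
    have h1 : ∑ u, Q v u * g u = 2 * (∑ u, P v u * g u) - g v := by
      simp only [hQ]
      have : ∀ u : V, (2 * P v u - (if v = u then 1 else 0)) * g u
          = 2 * (P v u * g u) - (if v = u then g u else 0) := by
        intro u; split <;> ring
      rw [Finset.sum_congr rfl fun u _ => this u, Finset.sum_sub_distrib,
          ← Finset.mul_sum, Finset.sum_ite_eq]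
      simp [hg]
    simp only [hq]
    rw [h1]
    simp only [hg]
    ring
  -- Cauchy-Schwarz: q v ^ 2 ≤ ∑ u, Q v u * (g u) ^ 2
  have hCS : ∀ v, q v ^ 2 ≤ ∑ u, Q v u * (g u) ^ 2 := by
    intro v
    have h1 : q v = ∑ u, Real.sqrt (Q v u) * (Real.sqrt (Q v u) * g u) := by
      simp only [hq]
      apply Finset.sum_congr rfl
      intro u _
      rw [← mul_assoc, Real.mul_self_sqrt (hQnn v u)]
    have h2 := Finset.sum_mul_sq_le_sq_mul_sq Finset.univ
      (fun u => Real.sqrt (Q v u)) (fun u => Real.sqrt (Q v u) * g u)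
    have h3 : ∑ u, Real.sqrt (Q v u) ^ 2 = 1 := by
      rw [Finset.sum_congr rfl fun u _ => Real.sq_sqrt (hQnn v u), hQrow]
    have h4 : ∑ u, (Real.sqrt (Q v u) * g u) ^ 2 = ∑ u, Q v u * (g u) ^ 2 := by
      apply Finset.sum_congr rfl
      intro u _
      rw [mul_pow, Real.sq_sqrt (hQnn v u)]
    calc q v ^ 2 = (∑ u, Real.sqrt (Q v u) * (Real.sqrt (Q v u) * g u)) ^ 2 := by
          rw [h1]
    _ ≤ (∑ u, Real.sqrt (Q v u) ^ 2) * ∑ u, (Real.sqrt (Q v u) * g u) ^ 2 := h2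
    _ = ∑ u, Q v u * (g u) ^ 2 := by rw [h3, h4, one_mul]
  have hqg : ∑ v, π v * (q v) ^ 2 ≤ ∑ v, π v * (g v) ^ 2 := by
    calc ∑ v, π v * (q v) ^ 2
        ≤ ∑ v, π v * ∑ u, Q v u * (g u) ^ 2 :=
          Finset.sum_le_sum fun v _ =>
            mul_le_mul_of_nonneg_left (hCS v) (hπnn v)
    _ = ∑ u, (∑ v, π v * Q v u) * (g u) ^ 2 := by
        simp only [Finset.mul_sum]
        rw [Finset.sum_comm]
        apply Finset.sum_congr rfl
        intro u _
        rw [Finset.sum_mul]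
        exact Finset.sum_congr rfl fun v _ => by ring
    _ = ∑ v, π v * (g v) ^ 2 := by
        apply Finset.sum_congr rfl
        intro u _
        rw [hQcol u]
  have hL : π w * (P ^ (2 * t + 2)) w w = ∑ v, π v * ((P ^ (t + 1)) v w) ^ 2 := by
    have := aux_L1 P π hrev w (t + 1)
    have h2 : 2 * (t + 1) = 2 * t + 2 := by ring
    rw [h2] at this
    exact this.symm
  have hR : π w * (P ^ (2 * t + 1)) w w
      = ∑ v, π v * ((P ^ t) v w * (P ^ (t + 1)) v w) :=
    (aux_L2 P π hrev w t).symm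
  rw [hL, hR]
  have key : ∀ v : V, π v * (g v * ((g v + q v) / 2))
      - π v * ((g v + q v) / 2) ^ 2
      = (π v * (g v) ^ 2 - π v * (q v) ^ 2) / 4 := by
    intro v; ring
  have : ∑ v, π v * ((P ^ (t + 1)) v w) ^ 2
      = ∑ v, π v * ((g v + q v) / 2) ^ 2 :=
    Finset.sum_congr rfl fun v _ => by rw [hPg v]
  rw [this]
  have : ∑ v, π v * ((P ^ t) v w * (P ^ (t + 1)) v w)
      = ∑ v, π v * (g v * ((g v + q v) / 2)) :=
    Finset.sum_congr rfl fun v _ => by rw [hPg v]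
  rw [this]
  have hsub : ∑ v, π v * (g v * ((g v + q v) / 2)) - ∑ v, π v * ((g v + q v) / 2) ^ 2
      = (∑ v, π v * (g v) ^ 2 - ∑ v, π v * (q v) ^ 2) / 4 := by
    rw [← Finset.sum_sub_distrib, ← Finset.sum_sub_distrib]
    rw [Finset.sum_congr rfl fun v _ => key v]
    rw [Finset.sum_div]
  linarith [hsub, hqg]

end Aux

/-- For an irreducible, reversible, lazy chain, the Dirichlet forms of the
    functions P^t_{·,w} sum to at most π_w:  Σ_{t=0}^∞ E(P^t_{·,w}) ≤ π_w. -/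
theorem dirichlet_sum_le_pi
    {V : Type*} [Fintype V] [DecidableEq V]
    (P : Matrix V V ℝ) (π : V → ℝ)
    (hnn : ∀ v u, 0 ≤ P v u) (hrow : ∀ v, ∑ u, P v u = 1)
    (hπnn : ∀ v, 0 ≤ π v) (hπsum : ∑ v, π v = 1)
    (hstat : ∀ u, ∑ v, π v * P v u = π u)
    (hrev : ∀ v u, π v * P v u = π u * P u v)
    (hirr : ∀ v u, ∃ t : ℕ, 0 < (P ^ t) v u)
    (hlazy : ∀ v, (1 / 2 : ℝ) ≤ P v v)
    (w : V) :
    Summable (fun t : ℕ =>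
      (1 / 2) * ∑ v, ∑ u, ((P ^ t) v w - (P ^ t) u w) ^ 2 * (π v * P v u)) ∧
    (∑' t : ℕ,
      (1 / 2) * ∑ v, ∑ u, ((P ^ t) v w - (P ^ t) u w) ^ 2 * (π v * P v u))
      ≤ π w := by
  set E : ℕ → ℝ := fun t =>
    (1 / 2) * ∑ v, ∑ u, ((P ^ t) v w - (P ^ t) u w) ^ 2 * (π v * P v u) with hE
  have hEnn : ∀ t, 0 ≤ E t := fun t =>
    mul_nonneg (by norm_num)
      (Finset.sum_nonneg fun v _ => Finset.sum_nonneg fun u _ =>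
        mul_nonneg (sq_nonneg _) (mul_nonneg (hπnn v) (hnn v u)))
  have hEid : ∀ t, E t = π w * (P ^ (2 * t)) w w - π w * (P ^ (2 * t + 1)) w w :=
    fun t => aux_E_ident P π hrow hstat hrev w t
  have hpartial : ∀ N, ∑ t ∈ Finset.range N, E t ≤ π w := by
    intro N
    have step : ∀ t, E t ≤ π w * (P ^ (2 * t)) w w - π w * (P ^ (2 * (t + 1))) w w := by
      intro t
      rw [hEid t]
      have hm := aux_mono P π hnn hrow hπnn hstat hrev hlazy w t
      have h22 : 2 * (t + 1) = 2 * t + 2 := by ring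
      rw [h22]
      linarith
    calc ∑ t ∈ Finset.range N, E t
        ≤ ∑ t ∈ Finset.range N,
            (π w * (P ^ (2 * t)) w w - π w * (P ^ (2 * (t + 1))) w w) :=
          Finset.sum_le_sum fun t _ => step t
    _ = π w * (P ^ (2 * 0)) w w - π w * (P ^ (2 * N)) w w :=
        Finset.sum_range_sub' (fun t => π w * (P ^ (2 * t)) w w) N
    _ ≤ π w := by
        have h1 : (P ^ (2 * 0)) w w = 1 := by
          norm_num [Matrix.one_apply]
        have h2 : 0 ≤ π w * (P ^ (2 * N)) w w :=
          mul_nonneg (hπnn w) (aux_pow_entry_nonneg P hnn _ w w)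
        rw [h1]
        linarith
  have hsum : Summable E := summable_of_sum_range_le hEnn hpartial
  exact ⟨hsum, Summable.tsum_le_of_sum_range_le hsum hpartial⟩
end
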